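/- Let γ be real with |γ| < π/2, 0 ≤ β < 1, λ ∈ D, and let P be analytic on D with P(0)=1, Re(e^{iγ}P(z)) > β cos γ, and P'(0) = 2(1-β)e^{-iγ}λ cos γ. Then for all z ∈ D: |P(z) - c(z,λ)| ≤ r(z,λ), where c(z,λ) = [(1+λz(e^{-iγ}-2β cos γ)e^{-iγ})(1-conj(λ)conj(z)) + |z|²(conj(z)-λ)(conj(λ)+z(e^{-iγ}-2β cos γ)e^{-iγ})] / [(1-|z|²)(1+|z|²-2Re(λz))] and r(z,λ) = 2(1-|λ|²)(1-β)|z|² cos γ / [(1-|z|²)(1+|z|²-2Re(λz))]. -/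

import Mathlib

open Complex Metric Set

lemma aux_disk (B U : ℂ) (ρ : ℝ) (hρ : 0 ≤ ρ) (hU : Complex.normSq U ≤ ρ^2)
    (hB : ρ^2 ≤ Complex.normSq B) :
    norm (B * U - ((ρ^2 : ℝ) : ℂ)) ≤ ρ * norm (B - (starRingEnd ℂ) U) := by
  have cid : ((ρ:ℂ))^2 * ((Complex.normSq (B - (starRingEnd ℂ) U) : ℝ) : ℂ)
      - ((Complex.normSq (B * U - ((ρ^2:ℝ):ℂ)) : ℝ) : ℂ)
      = (((Complex.normSq B : ℝ):ℂ) - ((ρ:ℂ))^2) * (((ρ:ℂ))^2 - ((Complex.normSq U : ℝ):ℂ)) := by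
    rw [← Complex.mul_conj, ← Complex.mul_conj, ← Complex.mul_conj, ← Complex.mul_conj]
    simp only [map_sub, map_mul, Complex.conj_conj, Complex.conj_ofReal, map_pow,
      Complex.ofReal_pow]
    ring
  have rid : ρ^2 * Complex.normSq (B - (starRingEnd ℂ) U)
      - Complex.normSq (B * U - ((ρ^2:ℝ):ℂ))
      = (Complex.normSq B - ρ^2) * (ρ^2 - Complex.normSq U) := by exact_mod_cast cid
  have h1 : Complex.normSq (B * U - ((ρ^2:ℝ):ℂ)) ≤ ρ^2 * Complex.normSq (B - (starRingEnd ℂ) U) := by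
    nlinarith
  calc norm (B * U - ((ρ^2:ℝ):ℂ)) = Real.sqrt (Complex.normSq (B * U - ((ρ^2:ℝ):ℂ))) :=
        by rw [Complex.norm_def]
    _ ≤ Real.sqrt (ρ^2 * Complex.normSq (B - (starRingEnd ℂ) U)) := Real.sqrt_le_sqrt h1
    _ = ρ * norm (B - (starRingEnd ℂ) U) := by
        rw [Real.sqrt_mul (sq_nonneg ρ), Real.sqrt_sq hρ, Complex.norm_def]

lemma mobius_bound (z lam w A : ℂ) (hz : norm z < 1) (hlam : norm lam < 1)
    (hstar : norm (w - lam * z) ≤ norm z * norm (z - (starRingEnd ℂ) lam * w)) :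
    norm ((1 + A * w) *
        (((1 - (norm z)^2) * (1 + (norm z)^2 - 2 * (lam * z).re) : ℝ) : ℂ)
        - ((1 + lam * z * A) * (1 - (starRingEnd ℂ) lam * (starRingEnd ℂ) z)
            + (((norm z)^2 : ℝ) : ℂ) * ((starRingEnd ℂ) z - lam) *
              ((starRingEnd ℂ) lam + z * A)) * (1 - w))
      ≤ norm (1 + A) * ((norm z)^2 * (1 - (norm lam)^2)) *
          norm (1 - w) := by
  have haz : 0 ≤ norm z := norm_nonneg z
  have hal : 0 ≤ norm lam := norm_nonneg lam
  set x : ℝ := (norm z)^2 with hxe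
  set m : ℝ := (norm lam)^2 with hme
  set r : ℝ := (lam * z).re with hre
  have hx0 : 0 ≤ x := sq_nonneg _
  have hm0 : 0 ≤ m := sq_nonneg _
  have hx1 : x < 1 := by nlinarith
  have hm1 : m < 1 := by nlinarith
  set t : ℝ := 1 - m * x with hte
  have ht : 0 < t := by nlinarith
  have hr_le : r ≤ norm lam * norm z := by
    rw [hre, ← norm_mul]; exact Complex.re_le_norm _
  have h2' : 0 ≤ 1 + x - 2 * r := by
    nlinarith [sq_nonneg (1 - norm z), mul_nonneg (sub_nonneg.2 hlam.le) haz]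
  set d : ℝ := (1 - x) * (1 + x - 2 * r) with hde
  have hd0 : 0 ≤ d := mul_nonneg (by linarith) h2'
  set ρ : ℝ := x * (1 - m) with hρe
  have hρ0 : 0 ≤ ρ := by nlinarith
  -- casts
  have hxc : ((x : ℝ) : ℂ) = z * (starRingEnd ℂ) z := by
    rw [hxe, Complex.sq_norm]; exact (Complex.mul_conj z).symm
  have hmc : ((m : ℝ) : ℂ) = lam * (starRingEnd ℂ) lam := by
    rw [hme, Complex.sq_norm]; exact (Complex.mul_conj lam).symm
  have hrc : (2 : ℂ) * ((r : ℝ) : ℂ) = lam * z + (starRingEnd ℂ) lam * (starRingEnd ℂ) z := by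
    have h := Complex.add_conj (lam * z)
    rw [map_mul] at h
    push_cast at h
    rw [hre]
    exact h.symm
  have htc : ((t : ℝ) : ℂ) = 1 - lam * (starRingEnd ℂ) lam * (z * (starRingEnd ℂ) z) := by
    rw [hte]; push_cast; rw [hxc, hmc]
  have hdc : ((d : ℝ) : ℂ) = (1 - z * (starRingEnd ℂ) z) *
      (1 + z * (starRingEnd ℂ) z - (lam * z + (starRingEnd ℂ) lam * (starRingEnd ℂ) z)) := by
    rw [hde]; push_cast; rw [hxc]; linear_combination (z * (starRingEnd ℂ) z - 1) * hrc
  have hρc : ((ρ : ℝ) : ℂ) = z * (starRingEnd ℂ) z * (1 - lam * (starRingEnd ℂ) lam) := by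
    rw [hρe]; push_cast; rw [hxc, hmc]
  set B : ℂ := ((t : ℝ) : ℂ) - (starRingEnd ℂ) z * (starRingEnd ℂ) lam * (1 - z * (starRingEnd ℂ) z)
    with hBe
  set U : ℂ := ((t : ℝ) : ℂ) * w - z * lam * (1 - z * (starRingEnd ℂ) z) with hUe
  -- main identity
  have I1 : ((t : ℝ) : ℂ) * ((1 + A * w) * ((d : ℝ) : ℂ)
        - ((1 + lam * z * A) * (1 - (starRingEnd ℂ) lam * (starRingEnd ℂ) z)
            + ((x : ℝ) : ℂ) * ((starRingEnd ℂ) z - lam) *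
              ((starRingEnd ℂ) lam + z * A)) * (1 - w))
      = (1 + A) * (B * U - ((ρ : ℝ) : ℂ)^2) := by
    rw [hBe, hUe, htc, hdc, hxc, hρc]
    ring
  -- normSq U ≤ ρ^2
  have nsq1 : Complex.normSq (w - lam * z) ≤ x * Complex.normSq (z - (starRingEnd ℂ) lam * w) := by
    have h2 := mul_le_mul hstar hstar (norm_nonneg _) (by positivity)
    rw [← Complex.sq_norm, ← Complex.sq_norm, hxe]
    nlinarith [h2]
  have cid2 : ((ρ : ℝ) : ℂ)^2 - ((Complex.normSq U : ℝ) : ℂ)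
      = ((t:ℝ):ℂ) * (((x:ℝ):ℂ) * ((Complex.normSq (z - (starRingEnd ℂ) lam * w) : ℝ) : ℂ)
          - ((Complex.normSq (w - lam * z) : ℝ) : ℂ)) := by
    rw [← Complex.mul_conj, ← Complex.mul_conj, ← Complex.mul_conj, hUe]
    simp only [map_sub, map_mul, map_one, Complex.conj_conj, Complex.conj_ofReal]
    rw [htc, hxc, hρc]
    ring
  have rid2 : ρ^2 - Complex.normSq U
      = t * (x * Complex.normSq (z - (starRingEnd ℂ) lam * w) - Complex.normSq (w - lam * z)) := by
    exact_mod_cast cid2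
  have hU : Complex.normSq U ≤ ρ^2 := by nlinarith
  -- ρ^2 ≤ normSq B
  have cid3 : ((Complex.normSq B : ℝ) : ℂ) - ((ρ : ℝ) : ℂ)^2 = ((t:ℝ):ℂ) * ((d:ℝ):ℂ) := by
    rw [← Complex.mul_conj, hBe]
    simp only [map_sub, map_mul, map_one, Complex.conj_conj, Complex.conj_ofReal]
    rw [htc, hdc, hρc]
    ring
  have rid3 : Complex.normSq B - ρ^2 = t * d := by exact_mod_cast cid3
  have hB : ρ^2 ≤ Complex.normSq B := by nlinarith
  have key := aux_disk B U ρ hρ0 hU hB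
  have hcast : ((ρ^2 : ℝ) : ℂ) = ((ρ : ℝ) : ℂ)^2 := by push_cast; ring
  rw [hcast] at key
  have hBconjU : B - (starRingEnd ℂ) U = ((t:ℝ):ℂ) * (1 - (starRingEnd ℂ) w) := by
    rw [hBe, hUe]
    simp only [map_sub, map_mul, map_one, Complex.conj_conj, Complex.conj_ofReal]
    ring
  have habsBU : norm (B - (starRingEnd ℂ) U) = t * norm (1 - w) := by
    rw [hBconjU, norm_mul, Complex.norm_real, Real.norm_eq_abs, abs_of_pos ht]
    have h1w : (starRingEnd ℂ) (1 - w) = 1 - (starRingEnd ℂ) w := by rw [map_sub, map_one]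
    rw [← h1w, Complex.norm_conj]
  -- assemble
  refine le_of_mul_le_mul_left ?_ ht
  calc t * norm ((1 + A * w) * ((d : ℝ) : ℂ)
        - ((1 + lam * z * A) * (1 - (starRingEnd ℂ) lam * (starRingEnd ℂ) z)
            + ((x : ℝ) : ℂ) * ((starRingEnd ℂ) z - lam) *
              ((starRingEnd ℂ) lam + z * A)) * (1 - w))
      = norm (((t : ℝ) : ℂ) * ((1 + A * w) * ((d : ℝ) : ℂ)
        - ((1 + lam * z * A) * (1 - (starRingEnd ℂ) lam * (starRingEnd ℂ) z)
            + ((x : ℝ) : ℂ) * ((starRingEnd ℂ) z - lam) *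
              ((starRingEnd ℂ) lam + z * A)) * (1 - w))) := by
        rw [norm_mul, Complex.norm_real, Real.norm_eq_abs, abs_of_pos ht]
    _ = norm (1 + A) * norm (B * U - ((ρ : ℝ) : ℂ)^2) := by rw [I1, norm_mul]
    _ ≤ norm (1 + A) * (ρ * (t * norm (1 - w))) := by
        refine mul_le_mul_of_nonneg_left ?_ (norm_nonneg _)
        rw [← habsBU]; exact key
    _ = t * (norm (1 + A) * ρ * norm (1 - w)) := by ring

set_option maxHeartbeats 1000000 in
theorem stmt_5 (γ β : ℝ) (hγ : |γ| < Real.pi / 2) (hβ0 : 0 ≤ β) (hβ1 : β < 1)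
    (lam : ℂ) (hlam : norm lam < 1)
    (P : ℂ → ℂ) (hP : DifferentiableOn ℂ P (ball (0:ℂ) 1)) (hP0 : P 0 = 1)
    (hre : ∀ z ∈ ball (0:ℂ) 1, β * Real.cos γ < (Complex.exp (γ * Complex.I) * P z).re)
    (hP'0 : deriv P 0 = 2 * (1 - β) * Complex.exp (-(γ * Complex.I)) * lam * Real.cos γ) :
    ∀ z ∈ ball (0:ℂ) 1,
      norm (P z -
        ((1 + lam * z * (Complex.exp (-(γ * Complex.I)) - 2 * β * Real.cos γ) *
            Complex.exp (-(γ * Complex.I))) * (1 - (starRingEnd ℂ) lam * (starRingEnd ℂ) z) +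
          ((norm z)^2 : ℝ) * ((starRingEnd ℂ) z - lam) *
            ((starRingEnd ℂ) lam + z * (Complex.exp (-(γ * Complex.I)) - 2 * β * Real.cos γ) *
              Complex.exp (-(γ * Complex.I)))) /
        (((1 - (norm z)^2) * (1 + (norm z)^2 - 2 * (lam * z).re) : ℝ)))
      ≤ 2 * (1 - (norm lam)^2) * (1 - β) * (norm z)^2 * Real.cos γ /
          ((1 - (norm z)^2) * (1 + (norm z)^2 - 2 * (lam * z).re)) := by
  have hγ' := abs_lt.1 hγ
  set c : ℝ := Real.cos γ with hce
  set s : ℝ := Real.sin γ with hse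
  have hc : 0 < c := Real.cos_pos_of_mem_Ioo ⟨by linarith [hγ'.1], hγ'.2⟩
  set E : ℂ := Complex.exp (-(↑γ * I)) with hEe
  set u : ℂ := Complex.exp (↑γ * I) with hue
  have huform : u = (c:ℂ) + (s:ℂ) * I := by
    rw [hue, Complex.exp_mul_I, ← Complex.ofReal_cos, ← Complex.ofReal_sin, ← hce, ← hse]
  have hEform : E = (c:ℂ) - (s:ℂ) * I := by
    rw [hEe, show -((γ:ℂ) * I) = (((-γ : ℝ)) : ℂ) * I by push_cast; ring, Complex.exp_mul_I,
      ← Complex.ofReal_cos, ← Complex.ofReal_sin, Real.cos_neg, Real.sin_neg, ← hce, ← hse]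
    push_cast
    ring
  have hsc : ((s:ℂ))^2 + ((c:ℂ))^2 = 1 := by
    have := Real.sin_sq_add_cos_sq γ
    rw [hce, hse]; exact_mod_cast congrArg (fun x : ℝ => (x : ℂ)) this
  have hEu : E * u = 1 := by rw [hEform, huform]; linear_combination hsc - Complex.I_sq * (s:ℂ)^2
  have hEsum : E + u = 2 * (c:ℂ) := by rw [hEform, huform]; ring
  have hconjE : (starRingEnd ℂ) E = u := by
    rw [hEform, huform, map_sub, map_mul, Complex.conj_ofReal, Complex.conj_ofReal,
      Complex.conj_I]; ring
  have hconju : (starRingEnd ℂ) u = E := by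
    rw [hEform, huform, map_add, map_mul, Complex.conj_ofReal, Complex.conj_ofReal,
      Complex.conj_I]; ring
  set A : ℂ := (E - 2 * (β:ℂ) * (c:ℂ)) * E with hAe
  have h1A : 1 + A = 2 * (1 - (β:ℂ)) * (c:ℂ) * E := by
    rw [hAe, hEform]; linear_combination (s:ℂ)^2 * Complex.I_sq - hsc
  have habs1A : norm (1 + A) = 2 * (1 - β) * c := by
    rw [h1A, show (2 * (1 - (β:ℂ)) * (c:ℂ)) = ((2 * (1 - β) * c : ℝ) : ℂ) by push_cast; ring,
      norm_mul, Complex.norm_real, Real.norm_eq_abs, hEe, Complex.norm_exp]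
    simp [abs_of_pos (by nlinarith : (0:ℝ) < 2 * (1 - β) * c)]
  have h1Ane : 1 + A ≠ 0 := by
    intro h0
    rw [h0, norm_zero] at habs1A
    nlinarith
  have hconjA : (starRingEnd ℂ) A = (u - 2 * (β:ℂ) * (c:ℂ)) * u := by
    rw [hAe]
    simp only [map_mul, map_sub, Complex.conj_ofReal, hconjE, map_ofNat]
  have h1Aconj : 1 + (starRingEnd ℂ) A = 2 * (1 - (β:ℂ)) * (c:ℂ) * u := by
    rw [hconjA, huform]; linear_combination (s:ℂ)^2 * Complex.I_sq - hsc
  -- positivity of normSq difference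
  have hpos : ∀ Q : ℂ, β * c < (u * Q).re →
      Complex.normSq (Q - 1) < Complex.normSq (Q + A) := by
    intro Q hQ
    have e : (Q + A) * (starRingEnd ℂ) (Q + A) - (Q - 1) * (starRingEnd ℂ) (Q - 1)
        = 2 * (1 - (β:ℂ)) * (c:ℂ) * ((u * Q) + (starRingEnd ℂ) (u * Q))
          - 4 * (β:ℂ) * (1 - (β:ℂ)) * (c:ℂ)^2 := by
      simp only [map_add, map_sub, map_mul, map_one, hconjA, hconju]
      linear_combination ((starRingEnd ℂ) Q) * h1A + Q * h1Aconj - Q * hconjA +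
        (-(2:ℂ) * (β:ℂ) * (c:ℂ)) * hEsum +
        (E * u + 1 - 2 * (β:ℂ) * (c:ℂ) * (E + u) + 4 * (β:ℂ)^2 * (c:ℂ)^2) * hEu
    rw [Complex.mul_conj, Complex.mul_conj, Complex.add_conj] at e
    have er : Complex.normSq (Q + A) - Complex.normSq (Q - 1)
        = 2 * (1 - β) * c * (2 * (u * Q).re) - 4 * β * (1 - β) * c^2 := by exact_mod_cast e
    nlinarith [mul_pos (mul_pos (show (0:ℝ) < 1 - β by linarith) hc)
      (show (0:ℝ) < (u * Q).re - β * c by linarith)]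
  -- the omega function
  have h0ball : (0:ℂ) ∈ ball (0:ℂ) 1 := mem_ball_self one_pos
  have hPAne : ∀ z ∈ ball (0:ℂ) 1, P z + A ≠ 0 := by
    intro z hz h0
    have h1 := hpos (P z) (hre z hz)
    rw [h0] at h1
    simp only [map_zero] at h1
    nlinarith [Complex.normSq_nonneg (P z - 1)]
  set ω : ℂ → ℂ := fun ζ => (P ζ - 1) / (P ζ + A) with hωe
  have habsω : ∀ ζ ∈ ball (0:ℂ) 1, norm (ω ζ) < 1 := by
    intro ζ hζ
    rw [hωe]
    simp only [norm_div]
    rw [div_lt_one (norm_pos_iff.2 (hPAne ζ hζ))]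
    have := hpos (P ζ) (hre ζ hζ)
    rw [Complex.norm_def, Complex.norm_def]
    exact Real.sqrt_lt_sqrt (Complex.normSq_nonneg _) this
  have hωdiff : DifferentiableOn ℂ ω (ball (0:ℂ) 1) :=
    (hP.sub_const 1).div (hP.add_const A) hPAne
  have hω0 : ω 0 = 0 := by simp [hωe, hP0]
  have hωmaps : MapsTo ω (ball (0:ℂ) 1) (ball (ω 0) 1) := by
    intro ζ hζ
    rw [hω0]
    exact mem_ball_zero_iff.2 (habsω ζ hζ)
  -- derivative at 0
  have hPd : HasDerivAt P (deriv P 0) 0 :=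
    (hP.differentiableAt (isOpen_ball.mem_nhds h0ball)).hasDerivAt
  have hωd : HasDerivAt ω ((deriv P 0 * (P 0 + A) - (P 0 - 1) * deriv P 0) / (P 0 + A)^2) 0 :=
    (hPd.sub_const 1).div (hPd.add_const A) (hPAne 0 h0ball)
  have hderiv : deriv ω 0 = lam := by
    rw [hωd.deriv, hP0]
    have hd0 : deriv P 0 = lam * (1 + A) := by
      rw [hP'0, h1A]; ring
    rw [hd0]
    field_simp [h1Ane]
    ring
  set g : ℂ → ℂ := dslope ω 0 with hge
  have hg : ∀ ζ ∈ ball (0:ℂ) 1, norm (g ζ) ≤ 1 := by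
    intro ζ hζ
    have := Complex.norm_dslope_le_div_of_mapsTo_ball hωdiff (hωmaps.mono_right ball_subset_closedBall) hζ
    simpa using this
  have hg0 : g 0 = lam := by rw [hge, dslope_same]; exact hderiv
  have hgdiff : DifferentiableOn ℂ g (ball (0:ℂ) 1) :=
    (differentiableOn_dslope (isOpen_ball.mem_nhds h0ball)).2 hωdiff
  set h : ℂ → ℂ := fun ζ => (g ζ - lam) / (1 - (starRingEnd ℂ) lam * g ζ) with hhe
  have hdne : ∀ ζ ∈ ball (0:ℂ) 1, 1 - (starRingEnd ℂ) lam * g ζ ≠ 0 := by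
    intro ζ hζ hzero
    have h1 : (1:ℂ) = (starRingEnd ℂ) lam * g ζ := by
      have := sub_eq_zero.1 hzero; exact this
    have h2 : (1:ℝ) = norm lam * norm (g ζ) := by
      calc (1:ℝ) = norm (1:ℂ) := by simp
        _ = norm ((starRingEnd ℂ) lam * g ζ) := by rw [← h1]
        _ = norm lam * norm (g ζ) := by rw [norm_mul, Complex.norm_conj]
    nlinarith [hg ζ hζ, norm_nonneg lam, norm_nonneg (g ζ)]
  have hhdiff : DifferentiableOn ℂ h (ball (0:ℂ) 1) := by
    rw [hhe]
    exact (hgdiff.sub_const lam).div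
      ((differentiableOn_const 1).sub ((differentiableOn_const _).mul hgdiff)) hdne
  have hh0 : h 0 = 0 := by rw [hhe]; simp [hg0]
  have hh1 : ∀ ζ ∈ ball (0:ℂ) 1, norm (h ζ) ≤ 1 := by
    intro ζ hζ
    have cid : (1 - (starRingEnd ℂ) lam * g ζ) * (starRingEnd ℂ) (1 - (starRingEnd ℂ) lam * g ζ)
        - (g ζ - lam) * (starRingEnd ℂ) (g ζ - lam)
        = (1 - lam * (starRingEnd ℂ) lam) * (1 - g ζ * (starRingEnd ℂ) (g ζ)) := by
      simp only [map_sub, map_mul, map_one, Complex.conj_conj]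
      ring
    rw [Complex.mul_conj, Complex.mul_conj, Complex.mul_conj, Complex.mul_conj] at cid
    have rid : Complex.normSq (1 - (starRingEnd ℂ) lam * g ζ) - Complex.normSq (g ζ - lam)
        = (1 - Complex.normSq lam) * (1 - Complex.normSq (g ζ)) := by exact_mod_cast cid
    have hg1 : Complex.normSq (g ζ) ≤ 1 := by
      rw [← Complex.sq_norm]; nlinarith [hg ζ hζ, norm_nonneg (g ζ)]
    have hl1 : Complex.normSq lam < 1 := by
      rw [← Complex.sq_norm]; nlinarith [norm_nonneg lam]
    have hle : Complex.normSq (g ζ - lam) ≤ Complex.normSq (1 - (starRingEnd ℂ) lam * g ζ) := by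
      nlinarith
    rw [hhe]
    simp only [norm_div]
    rw [div_le_one (norm_pos_iff.2 (hdne ζ hζ))]
    rw [Complex.norm_def, Complex.norm_def]
    exact Real.sqrt_le_sqrt hle
  have hhz : ∀ ζ ∈ ball (0:ℂ) 1, norm (h ζ) ≤ norm ζ := by
    intro ζ hζ
    refine le_of_forall_pos_le_add fun ε hε => ?_
    have hmaps : MapsTo h (ball (0:ℂ) 1) (ball (h 0) (1 + ε)) := by
      intro ζ' hζ'
      rw [hh0, mem_ball_zero_iff]
      exact lt_of_le_of_lt (hh1 ζ' hζ') (by linarith)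
    have := Complex.dist_le_div_mul_dist_of_mapsTo_ball hhdiff (hmaps.mono_right ball_subset_closedBall) hζ
    rw [hh0] at this
    simp only [dist_zero_right, div_one] at this
    have haζ : norm ζ ≤ 1 := le_of_lt (mem_ball_zero_iff.1 hζ)
    nlinarith [norm_nonneg ζ]
  -- the Schwarz-Pick consequence
  have hstar : ∀ z ∈ ball (0:ℂ) 1, norm (ω z - lam * z) ≤
      norm z * norm (z - (starRingEnd ℂ) lam * ω z) := by
    intro z hz
    rcases eq_or_ne z 0 with rfl | hz0
    · simp [hω0]
    · have hgz : g z = ω z / z := by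
        rw [hge, dslope_of_ne _ hz0, slope_def_field, hω0, sub_zero, sub_zero]
      have h1 := hhz z hz
      rw [hhe] at h1
      simp only [norm_div] at h1
      rw [div_le_iff₀ (norm_pos_iff.2 (hdne z hz))] at h1
      have e1 : ω z - lam * z = z * (g z - lam) := by
        rw [hgz]; field_simp; try ring
      have e2 : z - (starRingEnd ℂ) lam * ω z = z * (1 - (starRingEnd ℂ) lam * g z) := by
        rw [hgz]; field_simp; try ring
      rw [e1, e2, norm_mul, norm_mul]
      calc norm z * norm (g z - lam)
          ≤ norm z * (norm z * norm (1 - (starRingEnd ℂ) lam * g z)) :=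
            mul_le_mul_of_nonneg_left h1 (norm_nonneg z)
        _ = norm z * (norm z * norm (1 - (starRingEnd ℂ) lam * g z)) := rfl
  have hPω : ∀ z ∈ ball (0:ℂ) 1, P z * (1 - ω z) = 1 + A * ω z := by
    intro z hz
    rw [hωe]
    field_simp [hPAne z hz]
    ring
  -- final assembly
  intro z hz
  have hzlt : norm z < 1 := mem_ball_zero_iff.1 hz
  have haz : 0 ≤ norm z := norm_nonneg z
  have hal : 0 ≤ norm lam := norm_nonneg lam
  have hr_le : (lam * z).re ≤ norm lam * norm z := by
    rw [← norm_mul]; exact Complex.re_le_norm _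
  have hdpos : 0 < (1 - (norm z)^2) * (1 + (norm z)^2 - 2 * (lam * z).re) := by
    have h1 : 0 < 1 - (norm z)^2 := by nlinarith
    have h2 : 0 < 1 + (norm z)^2 - 2 * (lam * z).re := by
      nlinarith [sq_nonneg (1 - norm z), mul_nonneg (sub_nonneg.2 hlam.le) haz]
    exact mul_pos h1 h2
  have h1ω : 1 - ω z ≠ 0 := by
    intro h0
    have heq : ω z = 1 := by linear_combination -h0
    have hb := habsω z hz
    rw [heq] at hb
    simp at hb
  set D : ℝ := (1 - (norm z)^2) * (1 + (norm z)^2 - 2 * (lam * z).re) with hDe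
  have hDne : ((D:ℝ):ℂ) ≠ 0 := by exact_mod_cast hdpos.ne'
  have hmb := mobius_bound z lam (ω z) A hzlt hlam (hstar z hz)
  rw [← hDe] at hmb
  have hpw := hPω z hz
  set w : ℂ := ω z with hwe
  clear_value w
  have e1 : P z -
        ((1 + lam * z * (E - 2 * (β:ℂ) * (c:ℂ)) * E) *
            (1 - (starRingEnd ℂ) lam * (starRingEnd ℂ) z) +
          (((norm z)^2 : ℝ) : ℂ) * ((starRingEnd ℂ) z - lam) *
            ((starRingEnd ℂ) lam + z * (E - 2 * (β:ℂ) * (c:ℂ)) * E)) / ((D:ℝ):ℂ)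
      = ((1 + A * w) * ((D:ℝ):ℂ)
          - ((1 + lam * z * A) * (1 - (starRingEnd ℂ) lam * (starRingEnd ℂ) z)
            + (((norm z)^2 : ℝ) : ℂ) * ((starRingEnd ℂ) z - lam) *
              ((starRingEnd ℂ) lam + z * A)) * (1 - w)) / ((1 - w) * ((D:ℝ):ℂ)) := by
    rw [hAe] at hpw ⊢
    rw [eq_div_iff (mul_ne_zero h1ω hDne)]
    field_simp [hDne]
    linear_combination (((D:ℝ):ℂ)) * hpw
  rw [e1, norm_div, norm_mul, Complex.norm_real, Real.norm_eq_abs, abs_of_pos hdpos]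
  have habs1ω : 0 < norm (1 - w) := norm_pos_iff.2 h1ω
  rw [div_le_div_iff₀ (mul_pos habs1ω hdpos) hdpos]
  calc norm ((1 + A * w) * ((D:ℝ):ℂ)
          - ((1 + lam * z * A) * (1 - (starRingEnd ℂ) lam * (starRingEnd ℂ) z)
            + (((norm z)^2 : ℝ) : ℂ) * ((starRingEnd ℂ) z - lam) *
              ((starRingEnd ℂ) lam + z * A)) * (1 - w)) * D
      ≤ (norm (1 + A) * ((norm z)^2 * (1 - (norm lam)^2)) *
          norm (1 - w)) * D := mul_le_mul_of_nonneg_right hmb hdpos.le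
    _ = 2 * (1 - (norm lam)^2) * (1 - β) * (norm z)^2 * c *
          (norm (1 - w) * D) := by rw [habs1A]; ring
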